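/- Let x1,...,x5 be invertible elements of the Laurent polynomial ring Z[x1^{±1},...,x5^{±1}], and define yi = (x_{i+1} + x_{i-1})/x_i with indices mod 5. Then y1*y2*y3*y4*y5 - y1*y2*y3 - y1*y2*y5 - y2*y3*y4 - y3*y4*y5 - y1*y4*y5 + y1 + y2 + y3 + y4 + y5 = 2. -/
import Mathlib

set_option maxHeartbeats 1000000

/-- The Laurent polynomial ring `ℤ[x₁^{±1},...,xₙ^{±1}]`. -/
abbrev MvLaurent (n : ℕ) : Type := AddMonoidAlgebra ℤ (Fin n →₀ ℤ)

/-- For invertible elements `x1,...,x5` of `ℤ[x₁^{±1},...,x₅^{±1}]` and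
`yᵢ = (x_{i+1} + x_{i-1})/xᵢ` (indices mod 5), we have
`y1*y2*y3*y4*y5 - y1*y2*y3 - y1*y2*y5 - y2*y3*y4 - y3*y4*y5 - y1*y4*y5 + y1 + y2 + y3 + y4 + y5 = 2`. -/
theorem cycle_relation_five
    (x1 x2 x3 x4 x5 : (MvLaurent 5)ˣ)
    (y1 y2 y3 y4 y5 : MvLaurent 5)
    (hy1 : y1 = ((x2 : MvLaurent 5) + (x5 : MvLaurent 5)) * ((x1⁻¹ : (MvLaurent 5)ˣ) : MvLaurent 5))
    (hy2 : y2 = ((x3 : MvLaurent 5) + (x1 : MvLaurent 5)) * ((x2⁻¹ : (MvLaurent 5)ˣ) : MvLaurent 5))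
    (hy3 : y3 = ((x4 : MvLaurent 5) + (x2 : MvLaurent 5)) * ((x3⁻¹ : (MvLaurent 5)ˣ) : MvLaurent 5))
    (hy4 : y4 = ((x5 : MvLaurent 5) + (x3 : MvLaurent 5)) * ((x4⁻¹ : (MvLaurent 5)ˣ) : MvLaurent 5))
    (hy5 : y5 = ((x1 : MvLaurent 5) + (x4 : MvLaurent 5)) * ((x5⁻¹ : (MvLaurent 5)ˣ) : MvLaurent 5)) :
    y1 * y2 * y3 * y4 * y5 - y1 * y2 * y3 - y1 * y2 * y5 - y2 * y3 * y4 - y3 * y4 * y5 - y1 * y4 * y5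
      + y1 + y2 + y3 + y4 + y5 = 2 := by
  have e1 : y1 * (x1 : MvLaurent 5) = (x2 : MvLaurent 5) + (x5 : MvLaurent 5) := by
    rw [hy1, mul_assoc, ← Units.val_mul]; simp
  have e2 : y2 * (x2 : MvLaurent 5) = (x3 : MvLaurent 5) + (x1 : MvLaurent 5) := by
    rw [hy2, mul_assoc, ← Units.val_mul]; simp
  have e3 : y3 * (x3 : MvLaurent 5) = (x4 : MvLaurent 5) + (x2 : MvLaurent 5) := by
    rw [hy3, mul_assoc, ← Units.val_mul]; simp
  have e4 : y4 * (x4 : MvLaurent 5) = (x5 : MvLaurent 5) + (x3 : MvLaurent 5) := by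
    rw [hy4, mul_assoc, ← Units.val_mul]; simp
  have e5 : y5 * (x5 : MvLaurent 5) = (x1 : MvLaurent 5) + (x4 : MvLaurent 5) := by
    rw [hy5, mul_assoc, ← Units.val_mul]; simp
  have key : (y1 * y2 * y3 * y4 * y5 - y1 * y2 * y3 - y1 * y2 * y5 - y2 * y3 * y4
      - y3 * y4 * y5 - y1 * y4 * y5 + y1 + y2 + y3 + y4 + y5)
        * ((x1 * x2 * x3 * x4 * x5 : (MvLaurent 5)ˣ) : MvLaurent 5)
      = 2 * ((x1 * x2 * x3 * x4 * x5 : (MvLaurent 5)ˣ) : MvLaurent 5) := by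
    push_cast [Units.val_mul]
    calc (y1 * y2 * y3 * y4 * y5 - y1 * y2 * y3 - y1 * y2 * y5 - y2 * y3 * y4
        - y3 * y4 * y5 - y1 * y4 * y5 + y1 + y2 + y3 + y4 + y5)
          * ((x1 : MvLaurent 5) * x2 * x3 * x4 * x5)
        = (y1 * x1) * (y2 * x2) * (y3 * x3) * (y4 * x4) * (y5 * x5)
          - (y1 * x1) * (y2 * x2) * (y3 * x3) * ((x4 : MvLaurent 5) * x5)
          - (y1 * x1) * (y2 * x2) * (y5 * x5) * ((x3 : MvLaurent 5) * x4)
          - (y2 * x2) * (y3 * x3) * (y4 * x4) * ((x1 : MvLaurent 5) * x5)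
          - (y3 * x3) * (y4 * x4) * (y5 * x5) * ((x1 : MvLaurent 5) * x2)
          - (y1 * x1) * (y4 * x4) * (y5 * x5) * ((x2 : MvLaurent 5) * x3)
          + (y1 * x1) * ((x2 : MvLaurent 5) * x3 * x4 * x5)
          + (y2 * x2) * ((x1 : MvLaurent 5) * x3 * x4 * x5)
          + (y3 * x3) * ((x1 : MvLaurent 5) * x2 * x4 * x5)
          + (y4 * x4) * ((x1 : MvLaurent 5) * x2 * x3 * x5)
          + (y5 * x5) * ((x1 : MvLaurent 5) * x2 * x3 * x4) := by ring
      _ = 2 * ((x1 : MvLaurent 5) * x2 * x3 * x4 * x5) := by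
          rw [e1, e2, e3, e4, e5]; ring
  calc y1 * y2 * y3 * y4 * y5 - y1 * y2 * y3 - y1 * y2 * y5 - y2 * y3 * y4
      - y3 * y4 * y5 - y1 * y4 * y5 + y1 + y2 + y3 + y4 + y5
      = (y1 * y2 * y3 * y4 * y5 - y1 * y2 * y3 - y1 * y2 * y5 - y2 * y3 * y4
        - y3 * y4 * y5 - y1 * y4 * y5 + y1 + y2 + y3 + y4 + y5)
        * ((x1 * x2 * x3 * x4 * x5 : (MvLaurent 5)ˣ) : MvLaurent 5)
        * (((x1 * x2 * x3 * x4 * x5)⁻¹ : (MvLaurent 5)ˣ) : MvLaurent 5) := by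
        rw [Units.mul_inv_cancel_right]
    _ = 2 * ((x1 * x2 * x3 * x4 * x5 : (MvLaurent 5)ˣ) : MvLaurent 5)
        * (((x1 * x2 * x3 * x4 * x5)⁻¹ : (MvLaurent 5)ˣ) : MvLaurent 5) := by rw [key]
    _ = 2 := by rw [Units.mul_inv_cancel_right]
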